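/- arXiv:0706.1034 — 4 statements merged into one kernel-verified Lean document; each statement's English description precedes it below -/
import Mathlib

section
/- Let λ be a Young diagram. Call a box b ∉ λ addable if λ ∪ {b} is a Young diagram, and a box b ∈ λ removable if λ ∖ {b} is a Young diagram. Then: (1) the number of addable boxes of λ exceeds the number of removable boxes by exactly 1; (2) ∑_{b addable} c(b) = ∑_{b removable} c(b); (3) ∑_{b addable} c(b)² = ∑_{b removable} c(b)² + 2|λ|, where c((i,j)) := j − i is the content of the box (i,j). -/
open Finset

/-- A box `b ∉ λ` is addable if adding it to `λ` again yields a Young diagram. -/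
def YoungDiagram.IsAddable (μ : YoungDiagram) (b : ℕ × ℕ) : Prop :=
  b ∉ μ.cells ∧ ∃ ν : YoungDiagram, ν.cells = insert b μ.cells

/-- A box `b ∈ λ` is removable if deleting it from `λ` again yields a Young diagram. -/
def YoungDiagram.IsRemovable (μ : YoungDiagram) (b : ℕ × ℕ) : Prop :=
  b ∈ μ.cells ∧ ∃ ν : YoungDiagram, ν.cells = μ.cells.erase b

namespace YoungDiagram

lemma isAddable_iff' (μ : YoungDiagram) (i j : ℕ) :
    μ.IsAddable (i, j) ↔ j = μ.rowLen i ∧ (i = 0 ∨ μ.rowLen i < μ.rowLen (i - 1)) := by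
  constructor
  · rintro ⟨hnot, ν, hν⟩
    rw [mem_cells, mem_iff_lt_rowLen, not_lt] at hnot
    have hij : (i, j) ∈ ν.cells := by rw [hν]; exact Finset.mem_insert_self _ _
    have hle : j = μ.rowLen i := by
      by_contra h
      have hlt : μ.rowLen i < j := lt_of_le_of_ne hnot (Ne.symm h)
      have : (i, μ.rowLen i) ∈ ν := ν.up_left_mem le_rfl hlt.le hij
      rw [← mem_cells, hν, Finset.mem_insert] at this
      rcases this with h' | h'
      · exact absurd (congrArg Prod.snd h') hlt.ne
      · simp [mem_cells, mem_iff_lt_rowLen] at h'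
    refine ⟨hle, ?_⟩
    rcases Nat.eq_zero_or_pos i with hi | hi
    · exact Or.inl hi
    · right
      have : (i - 1, j) ∈ ν := ν.up_left_mem (Nat.sub_le _ _) le_rfl hij
      rw [← mem_cells, hν, Finset.mem_insert] at this
      rcases this with h' | h'
      · exfalso
        have := congrArg Prod.fst h'
        simp at this
        omega
      · rw [mem_cells, mem_iff_lt_rowLen] at h'
        omega
  · rintro ⟨rfl, hcond⟩
    have hnot : (i, μ.rowLen i) ∉ μ.cells := by
      simp [mem_cells, mem_iff_lt_rowLen]
    refine ⟨hnot, ⟨insert (i, μ.rowLen i) μ.cells, ?_⟩, rfl⟩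
    intro a b hba ha
    simp only [Finset.coe_insert, Set.mem_insert_iff, mem_coe, mem_cells] at ha ⊢
    obtain ⟨b1, b2⟩ := b
    obtain ⟨a1, a2⟩ := a
    obtain ⟨h1, h2⟩ := Prod.mk_le_mk.mp hba
    rcases ha with h | h
    · have hh : a1 = i ∧ a2 = μ.rowLen i := by simpa [Prod.ext_iff] using h
      by_cases hb2 : b2 < μ.rowLen i
      · right
        rw [mem_iff_lt_rowLen]
        exact lt_of_lt_of_le hb2 (μ.rowLen_anti _ _ (hh.1 ▸ h1))
      · have hb2' : b2 = μ.rowLen i := le_antisymm (hh.2 ▸ h2) (not_lt.mp hb2)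
        by_cases hb1 : b1 = i
        · left; simp [hb1, hb2']
        · right
          have hb1i : b1 < i := lt_of_le_of_ne (hh.1 ▸ h1) hb1
          rcases hcond with h0 | hlt
          · omega
          · rw [mem_iff_lt_rowLen]
            calc b2 = μ.rowLen i := hb2'
            _ < μ.rowLen (i - 1) := hlt
            _ ≤ μ.rowLen b1 := μ.rowLen_anti _ _ (by omega)
    · right; exact μ.up_left_mem h1 h2 h

lemma isRemovable_iff' (μ : YoungDiagram) (i j : ℕ) :
    μ.IsRemovable (i, j) ↔ j + 1 = μ.rowLen i ∧ μ.rowLen (i + 1) ≤ j := by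
  constructor
  · rintro ⟨hmem, ν, hν⟩
    rw [mem_cells, mem_iff_lt_rowLen] at hmem
    have key : ∀ a1 a2 : ℕ, (a1, a2) ∈ μ → i ≤ a1 → j ≤ a2 → (a1, a2) ≠ (i, j) → False := by
      intro a1 a2 ha h1 h2 hne
      have ha' : (a1, a2) ∈ ν.cells := by
        rw [hν, Finset.mem_erase]
        exact ⟨hne, (mem_cells _).mpr ha⟩
      have hij : (i, j) ∈ ν := ν.up_left_mem h1 h2 ((mem_cells _).mp ha')
      rw [← mem_cells, hν, Finset.mem_erase] at hij
      exact hij.1 rfl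
    constructor
    · by_contra h
      have hlt : j + 1 < μ.rowLen i := by omega
      exact key i (j + 1) (mem_iff_lt_rowLen.mpr hlt) le_rfl (by omega) (by simp)
    · by_contra h
      exact key (i + 1) j (mem_iff_lt_rowLen.mpr (by omega)) (by omega) le_rfl (by simp)
  · rintro ⟨hj, hnext⟩
    have hmem : (i, j) ∈ μ.cells := by rw [mem_cells, mem_iff_lt_rowLen]; omega
    refine ⟨hmem, ⟨μ.cells.erase (i, j), ?_⟩, rfl⟩
    intro a b hba ha
    simp only [Finset.coe_erase, Set.mem_diff, mem_coe, mem_cells, Set.mem_singleton_iff] at ha ⊢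
    obtain ⟨ha, hane⟩ := ha
    obtain ⟨b1, b2⟩ := b
    obtain ⟨a1, a2⟩ := a
    obtain ⟨h1, h2⟩ := Prod.mk_le_mk.mp hba
    refine ⟨μ.up_left_mem h1 h2 ha, ?_⟩
    intro hb
    have hh : b1 = i ∧ b2 = j := by simpa [Prod.ext_iff] using hb
    rw [mem_iff_lt_rowLen] at ha
    have hra : μ.rowLen a1 ≤ μ.rowLen i := μ.rowLen_anti _ _ (by omega)
    have ha1 : a1 = i := by
      by_contra hne
      have h1' : i + 1 ≤ a1 := by omega
      have := μ.rowLen_anti _ _ h1'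
      omega
    apply hane
    have ha2 : a2 = j := by omega
    simp [ha1, ha2]

lemma rowLen_colLen_zero (μ : YoungDiagram) : μ.rowLen (μ.colLen 0) = 0 := by
  by_contra h
  have hmem : (μ.colLen 0, 0) ∈ μ := mem_iff_lt_rowLen.mpr (by omega)
  rw [mem_iff_lt_colLen] at hmem
  omega

lemma rowLen_pos_of_lt (μ : YoungDiagram) {i : ℕ} (hi : i < μ.colLen 0) : 0 < μ.rowLen i := by
  have hmem : (i, 0) ∈ μ := mem_iff_lt_colLen.mpr hi
  rwa [mem_iff_lt_rowLen] at hmem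

/-- Rows at which a box can be added. -/
def addRows (μ : YoungDiagram) : Finset ℕ :=
  (range (μ.colLen 0 + 1)).filter fun i => i = 0 ∨ μ.rowLen i < μ.rowLen (i - 1)

/-- Rows at which a box can be removed. -/
def remRows (μ : YoungDiagram) : Finset ℕ :=
  (range (μ.colLen 0)).filter fun i => μ.rowLen (i + 1) < μ.rowLen i

lemma addable_set_eq (μ : YoungDiagram) :
    {b : ℕ × ℕ | μ.IsAddable b} = ↑(μ.addRows.image fun i => (i, μ.rowLen i)) := by
  ext ⟨i, j⟩
  simp only [Set.mem_setOf_eq, isAddable_iff', Finset.coe_image, Set.mem_image, mem_coe,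
    addRows, Finset.mem_filter, Finset.mem_range, Prod.mk.injEq]
  constructor
  · rintro ⟨rfl, hc⟩
    refine ⟨i, ⟨?_, hc⟩, rfl, rfl⟩
    rcases hc with rfl | hlt
    · omega
    · have : (i - 1, 0) ∈ μ := mem_iff_lt_rowLen.mpr (by omega)
      rw [mem_iff_lt_colLen] at this
      rcases Nat.eq_zero_or_pos i with h0 | h0 <;> omega
  · rintro ⟨k, ⟨_, hc⟩, rfl, rfl⟩
    exact ⟨rfl, hc⟩

lemma removable_set_eq (μ : YoungDiagram) :
    {b : ℕ × ℕ | μ.IsRemovable b} = ↑(μ.remRows.image fun i => (i, μ.rowLen i - 1)) := by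
  ext ⟨i, j⟩
  simp only [Set.mem_setOf_eq, isRemovable_iff', Finset.coe_image, Set.mem_image, mem_coe,
    remRows, Finset.mem_filter, Finset.mem_range, Prod.mk.injEq]
  constructor
  · rintro ⟨hj, hnext⟩
    refine ⟨i, ⟨?_, by omega⟩, rfl, by omega⟩
    have : (i, 0) ∈ μ := mem_iff_lt_rowLen.mpr (by omega)
    rwa [mem_iff_lt_colLen] at this
  · rintro ⟨k, ⟨hk, hc⟩, rfl, rfl⟩
    constructor <;> omega

lemma card_eq_sum_rowLens (μ : YoungDiagram) :
    μ.card = ∑ i ∈ range (μ.colLen 0), μ.rowLen i := by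
  have hcells : μ.cells = (range (μ.colLen 0)).biUnion μ.row := by
    ext ⟨i, j⟩
    simp only [Finset.mem_biUnion, Finset.mem_range, mem_row_iff, mem_cells]
    constructor
    · intro h
      refine ⟨i, ?_, h, rfl⟩
      have : (i, 0) ∈ μ := μ.up_left_mem le_rfl (Nat.zero_le _) h
      rwa [mem_iff_lt_colLen] at this
    · rintro ⟨k, _, h, rfl⟩; exact h
  show μ.cells.card = _
  rw [hcells, Finset.card_biUnion]
  · exact Finset.sum_congr rfl fun i _ => (μ.rowLen_eq_card).symm
  · intro x _ y _ hxy
    simp only [Finset.disjoint_left, mem_row_iff]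
    rintro a ⟨_, rfl⟩ ⟨_, h⟩
    exact hxy h

lemma key_sum (μ : YoungDiagram) (g : ℤ → ℤ) :
    (∑ i ∈ μ.addRows, g ((μ.rowLen i : ℤ) - i))
      = (∑ i ∈ μ.remRows, g ((μ.rowLen i : ℤ) - 1 - i))
        + g (-(μ.colLen 0 : ℤ))
        + ∑ i ∈ range (μ.colLen 0),
            (g ((μ.rowLen i : ℤ) - i) - g ((μ.rowLen i : ℤ) - 1 - i)) := by
  have hsplit : ∀ (n : ℕ) (p : ℕ → Prop) [DecidablePred p] (f : ℕ → ℤ),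
      ∑ i ∈ range n, (if p i then f i else 0)
        = ∑ i ∈ range n, f i - ∑ i ∈ range n, (if p i then 0 else f i) := by
    intro n p _ f
    rw [eq_sub_iff_add_eq, ← Finset.sum_add_distrib]
    exact Finset.sum_congr rfl fun i _ => by split <;> ring
  rw [addRows, remRows, Finset.sum_filter, Finset.sum_filter, hsplit, hsplit]
  have hNA : (∑ i ∈ range (μ.colLen 0 + 1),
        if i = 0 ∨ μ.rowLen i < μ.rowLen (i - 1) then 0 else g ((μ.rowLen i : ℤ) - i))
      = ∑ i ∈ range (μ.colLen 0),
          if μ.rowLen (i + 1) < μ.rowLen i then 0 else g ((μ.rowLen i : ℤ) - 1 - i) := by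
    rw [Finset.sum_range_succ', if_pos (Or.inl rfl), add_zero]
    refine Finset.sum_congr rfl fun i _ => ?_
    have hanti := μ.rowLen_anti i (i + 1) (by omega)
    rw [Nat.add_sub_cancel]
    by_cases h : μ.rowLen (i + 1) < μ.rowLen i
    · rw [if_pos (Or.inr h), if_pos h]
    · have heq : μ.rowLen (i + 1) = μ.rowLen i := le_antisymm hanti (not_lt.mp h)
      have hval : ((μ.rowLen (i + 1) : ℤ) - ((i + 1 : ℕ) : ℤ)) = (μ.rowLen i : ℤ) - 1 - i := by
        rw [heq]; push_cast; ring
      rw [if_neg (by omega : ¬(i + 1 = 0 ∨ μ.rowLen (i + 1) < μ.rowLen i)), if_neg h]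
      push_cast
      push_cast at hval
      rw [hval]
  rw [hNA, Finset.sum_range_succ]
  have hm : ((μ.rowLen (μ.colLen 0) : ℤ) - (μ.colLen 0 : ℕ)) = -(μ.colLen 0 : ℤ) := by
    rw [μ.rowLen_colLen_zero]; simp
  rw [hm, Finset.sum_sub_distrib]
  ring

end YoungDiagram

/-- For any Young diagram `λ`: the number of addable boxes exceeds the
number of removable boxes by 1; the sums of the contents `c(b) = j - i` over addable
and removable boxes agree; and the sums of the squared contents differ by `2|λ|`. -/
theorem addable_removable_contents (μ : YoungDiagram) :
    ({b : ℕ × ℕ | μ.IsAddable b}.ncard = {b : ℕ × ℕ | μ.IsRemovable b}.ncard + 1) ∧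
      ((∑ᶠ b ∈ {b : ℕ × ℕ | μ.IsAddable b}, ((b.2 : ℤ) - (b.1 : ℤ)))
          = ∑ᶠ b ∈ {b : ℕ × ℕ | μ.IsRemovable b}, ((b.2 : ℤ) - (b.1 : ℤ))) ∧
      ((∑ᶠ b ∈ {b : ℕ × ℕ | μ.IsAddable b}, ((b.2 : ℤ) - (b.1 : ℤ)) ^ 2)
          = (∑ᶠ b ∈ {b : ℕ × ℕ | μ.IsRemovable b}, ((b.2 : ℤ) - (b.1 : ℤ)) ^ 2)
            + 2 * (μ.card : ℤ)) := by
  classical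
  rw [μ.addable_set_eq, μ.removable_set_eq]
  have hinjA : ∀ x ∈ μ.addRows, ∀ y ∈ μ.addRows,
      (x, μ.rowLen x) = (y, μ.rowLen y) → x = y := fun x _ y _ h => (Prod.ext_iff.mp h).1
  have hinjR : ∀ x ∈ μ.remRows, ∀ y ∈ μ.remRows,
      (x, μ.rowLen x - 1) = (y, μ.rowLen y - 1) → x = y := fun x _ y _ h => (Prod.ext_iff.mp h).1
  have hApush : ∀ f : ℕ × ℕ → ℤ,
      (∑ᶠ b ∈ (↑(μ.addRows.image fun i => (i, μ.rowLen i)) : Set (ℕ × ℕ)), f b)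
        = ∑ i ∈ μ.addRows, f (i, μ.rowLen i) := by
    intro f
    rw [finsum_mem_coe_finset, Finset.sum_image hinjA]
  have hRpush : ∀ f : ℕ × ℕ → ℤ,
      (∑ᶠ b ∈ (↑(μ.remRows.image fun i => (i, μ.rowLen i - 1)) : Set (ℕ × ℕ)), f b)
        = ∑ i ∈ μ.remRows, f (i, μ.rowLen i - 1) := by
    intro f
    rw [finsum_mem_coe_finset, Finset.sum_image hinjR]
  have hRpos : ∀ i ∈ μ.remRows, 0 < μ.rowLen i := by
    intro i hi
    rw [YoungDiagram.remRows, Finset.mem_filter, Finset.mem_range] at hi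
    exact μ.rowLen_pos_of_lt hi.1
  have hRcast : ∀ i ∈ μ.remRows, ((μ.rowLen i - 1 : ℕ) : ℤ) = (μ.rowLen i : ℤ) - 1 := by
    intro i hi
    have := hRpos i hi
    push_cast [Nat.cast_sub this]
    ring
  refine ⟨?_, ?_, ?_⟩
  · rw [Set.ncard_coe_finset, Set.ncard_coe_finset,
      Finset.card_image_of_injOn hinjA, Finset.card_image_of_injOn hinjR]
    have h1 := μ.key_sum fun _ => 1
    simp only [sub_self, Finset.sum_const, Finset.sum_sub_distrib] at h1
    simp only [nsmul_eq_mul, mul_one, sub_self, add_zero] at h1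
    exact_mod_cast h1
  · rw [hApush, hRpush]
    dsimp only
    have h1 := μ.key_sum id
    simp only [id] at h1
    have h2 : ∑ i ∈ range (μ.colLen 0),
        (((μ.rowLen i : ℤ) - i) - ((μ.rowLen i : ℤ) - 1 - i)) = (μ.colLen 0 : ℤ) := by
      rw [Finset.sum_congr rfl fun i _ => (by ring : ((μ.rowLen i : ℤ) - i) - ((μ.rowLen i : ℤ) - 1 - i) = 1)]
      simp
    rw [h2] at h1
    calc ∑ i ∈ μ.addRows, ((μ.rowLen i : ℤ) - i) = _ := h1
    _ = ∑ i ∈ μ.remRows, ((μ.rowLen i : ℤ) - 1 - i) := by ring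
    _ = ∑ i ∈ μ.remRows, (((μ.rowLen i - 1 : ℕ) : ℤ) - i) := by
        refine Finset.sum_congr rfl fun i hi => ?_
        rw [hRcast i hi]
  · rw [hApush, hRpush]
    dsimp only
    have h1 := μ.key_sum fun x => x ^ 2
    beta_reduce at h1
    have hsq : ∑ i ∈ range (μ.colLen 0),
        (((μ.rowLen i : ℤ) - i) ^ 2 - ((μ.rowLen i : ℤ) - 1 - i) ^ 2)
        = ∑ i ∈ range (μ.colLen 0), (2 * (μ.rowLen i : ℤ) - (2 * (i : ℤ) + 1)) := by
      refine Finset.sum_congr rfl fun i _ => by ring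
    have hodd : ∀ n : ℕ, ∑ i ∈ range n, (2 * (i : ℤ) + 1) = (n : ℤ) ^ 2 := by
      intro n
      induction n with
      | zero => simp
      | succ k ih => rw [Finset.sum_range_succ, ih]; push_cast; ring
    have hcard : ∑ i ∈ range (μ.colLen 0), (μ.rowLen i : ℤ) = (μ.card : ℤ) := by
      rw [μ.card_eq_sum_rowLens]; push_cast; rfl
    have hsum : ∑ i ∈ range (μ.colLen 0),
        (((μ.rowLen i : ℤ) - i) ^ 2 - ((μ.rowLen i : ℤ) - 1 - i) ^ 2)
        = 2 * (μ.card : ℤ) - (μ.colLen 0 : ℤ) ^ 2 := by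
      rw [hsq, Finset.sum_sub_distrib, hodd, ← Finset.mul_sum, hcard]
    rw [hsum] at h1
    have hfin : ∑ i ∈ μ.remRows, (((μ.rowLen i - 1 : ℕ) : ℤ) - i) ^ 2
        = ∑ i ∈ μ.remRows, ((μ.rowLen i : ℤ) - 1 - i) ^ 2 := by
      refine Finset.sum_congr rfl fun i hi => ?_
      rw [hRcast i hi]
    rw [hfin]
    calc ∑ i ∈ μ.addRows, ((μ.rowLen i : ℤ) - i) ^ 2 = _ := h1
    _ = ∑ i ∈ μ.remRows, ((μ.rowLen i : ℤ) - 1 - i) ^ 2 + 2 * (μ.card : ℤ) := by ring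
end

section
/- Let k, l be positive integers and take z = k, z' = −l in the definition of the operators E, F, H below. Then the finite-dimensional subspace V_{k,l} of V spanned by the basis vectors δ_λ with λ contained in the k×l rectangle (i.e. λ has at most k rows and at most l columns) is invariant under each of E, F, and H. -/
/-- `μ ↗ ν` : the Young diagram `ν` is obtained from `μ` by adding one box. -/
def YoungDiagram.Covers (μ ν : YoungDiagram) : Prop :=
  μ ≤ ν ∧ ν.card = μ.card + 1

/-- `(w)_{λ/μ} = ∏_{(i,j) ∈ λ∖μ} (w + j - i)`. -/
noncomputable def YoungDiagram.poch (w : ℂ) (μ l : YoungDiagram) : ℂ :=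
  ∏ b ∈ l.cells \ μ.cells, (w + (b.2 : ℂ) - (b.1 : ℂ))

/-- The space of finitely supported complex functions on the set of all Young diagrams,
with basis `{δ_λ}` (`δ_λ = Finsupp.single λ 1`). -/
abbrev YDSpace : Type := YoungDiagram →₀ ℂ

open YoungDiagram in
/-- The operator `E`: `E δ_λ = ∑_{ν ↘ λ} (z)_{ν/λ}(z')_{ν/λ} δ_ν`, extended linearly. -/
noncomputable def Eop (z z' : ℂ) : YDSpace →ₗ[ℂ] YDSpace :=
  Finsupp.lsum ℂ fun l => LinearMap.toSpanSingleton ℂ YDSpace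
    (∑ᶠ (ν : YoungDiagram) (_ : Covers l ν),
      (poch z l ν * poch z' l ν) • Finsupp.single ν (1 : ℂ))

open YoungDiagram in
/-- The operator `F`: `F δ_λ = -∑_{μ ↗ λ} δ_μ`, extended linearly. -/
noncomputable def Fop : YDSpace →ₗ[ℂ] YDSpace :=
  Finsupp.lsum ℂ fun l => LinearMap.toSpanSingleton ℂ YDSpace
    (-∑ᶠ (μ : YoungDiagram) (_ : Covers μ l), Finsupp.single μ (1 : ℂ))

/-- The operator `H`: `H δ_λ = (zz' + 2|λ|) δ_λ`, extended linearly. -/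
noncomputable def Hop (z z' : ℂ) : YDSpace →ₗ[ℂ] YDSpace :=
  Finsupp.lsum ℂ fun l => LinearMap.toSpanSingleton ℂ YDSpace
    ((z * z' + 2 * (l.card : ℂ)) • Finsupp.single l (1 : ℂ))

open YoungDiagram

/-- Any finsum of elements of a submodule lies in the submodule. -/
lemma finsum_mem_submodule {M : Type*} [AddCommMonoid M] [Module ℂ M] {ι : Type*}
    (g : ι → M) (W : Submodule ℂ M) (h : ∀ i, g i ∈ W) : (∑ᶠ i, g i) ∈ W := by
  by_cases hfin : (Function.support g).Finite
  · rw [finsum_eq_sum g hfin]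
    exact Submodule.sum_mem W fun i _ => h i
  · rw [finsum_of_infinite_support hfin]
    exact W.zero_mem

/-- If a box of `ν` lies outside the `k × l` rectangle while `μ` (covered by `ν`)
lies inside, then the product of Pochhammer factors vanishes. -/
lemma poch_boundary_zero (k l : ℕ) (μ ν : YoungDiagram)
    (hμ : ∀ b ∈ μ.cells, b.1 < k ∧ b.2 < l)
    (hc : YoungDiagram.Covers μ ν) (b : ℕ × ℕ) (hb : b ∈ ν.cells)
    (hbad : ¬(b.1 < k ∧ b.2 < l)) :
    poch (k : ℂ) μ ν * poch (-(l : ℂ)) μ ν = 0 := by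
  obtain ⟨hle, hcard⟩ := hc
  have hsub : μ.cells ⊆ ν.cells := hle
  have hbnot : b ∉ μ.cells := fun h => hbad (hμ b h)
  have hbmem : b ∈ ν.cells \ μ.cells := Finset.mem_sdiff.2 ⟨hb, hbnot⟩
  have hcard1 : (ν.cells \ μ.cells).card = 1 := by
    rw [Finset.card_sdiff_of_subset hsub]
    simp only [YoungDiagram.card] at hcard
    omega
  have hsingle : ν.cells \ μ.cells = {b} := by
    obtain ⟨a, ha⟩ := Finset.card_eq_one.1 hcard1
    rw [ha] at hbmem ⊢
    rw [Finset.mem_singleton] at hbmem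
    rw [hbmem]
  have hother : ∀ c ∈ ν.cells, c ≠ b → c ∈ μ.cells := by
    intro c hc hne
    by_contra hcm
    have : c ∈ ν.cells \ μ.cells := Finset.mem_sdiff.2 ⟨hc, hcm⟩
    rw [hsingle, Finset.mem_singleton] at this
    exact hne this
  have hval : ((k : ℂ) + b.2 - b.1) * (-(l : ℂ) + b.2 - b.1) = 0 := by
    rcases not_and_or.1 hbad with h1 | h2
    · -- b.1 ≥ k : show b.1 = k and b.2 = 0
      push_neg at h1
      have h1k : b.1 = k := by
        by_contra hne
        have hkb : k < b.1 := lt_of_le_of_ne h1 (Ne.symm hne)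
        have hm : (k, b.2) ∈ ν.cells := by
          rw [mem_cells] at hb ⊢
          exact ν.up_left_mem (le_of_lt hkb) le_rfl (by simpa using hb)
        have hne' : (k, b.2) ≠ b := by
          intro h; rw [← h] at hkb; simp at hkb
        have h' : k < k := (hμ _ (hother _ hm hne')).1
        omega
      have h2z : b.2 = 0 := by
        by_contra hne
        have hm : (b.1, 0) ∈ ν.cells := by
          rw [mem_cells] at hb ⊢
          exact ν.up_left_mem le_rfl (Nat.zero_le _) (by simpa using hb)
        have hne' : (b.1, 0) ≠ b := by
          intro h
          have : (0 : ℕ) = b.2 := congrArg Prod.snd h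
          omega
        have h' : b.1 < k := (hμ _ (hother _ hm hne')).1
        omega
      apply mul_eq_zero_of_left
      rw [h1k, h2z]
      push_cast
      ring
    · -- b.2 ≥ l : show b.2 = l and b.1 = 0
      push_neg at h2
      have h2l : b.2 = l := by
        by_contra hne
        have hlb : l < b.2 := lt_of_le_of_ne h2 (Ne.symm hne)
        have hm : (b.1, l) ∈ ν.cells := by
          rw [mem_cells] at hb ⊢
          exact ν.up_left_mem le_rfl (le_of_lt hlb) (by simpa using hb)
        have hne' : (b.1, l) ≠ b := by
          intro h
          have : l = b.2 := congrArg Prod.snd h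
          omega
        have h' : l < l := (hμ _ (hother _ hm hne')).2
        omega
      have h1z : b.1 = 0 := by
        by_contra hne
        have hm : (0, b.2) ∈ ν.cells := by
          rw [mem_cells] at hb ⊢
          exact ν.up_left_mem (Nat.zero_le _) le_rfl (by simpa using hb)
        have hne' : (0, b.2) ≠ b := by
          intro h
          have : (0 : ℕ) = b.1 := congrArg Prod.fst h
          omega
        have h' : b.2 < l := (hμ _ (hother _ hm hne')).2
        omega
      apply mul_eq_zero_of_right
      rw [h2l, h1z]
      push_cast
      ring
  unfold YoungDiagram.poch
  rw [hsingle, Finset.prod_singleton, Finset.prod_singleton]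
  exact hval

/-- For `z = k`, `z' = -l` (`k, l` positive integers), the subspace
`V_{k,l}` spanned by the vectors `δ_λ` with `λ` contained in the `k × l` rectangle
(at most `k` rows and at most `l` columns) is invariant under `E`, `F` and `H`. -/
theorem rectangle_subspace_invariant (k l : ℕ) (hk : 0 < k) (hl : 0 < l) :
    ∀ W : Submodule ℂ YDSpace,
      W = Submodule.span ℂ {v : YDSpace | ∃ μ : YoungDiagram,
          (∀ b ∈ μ.cells, b.1 < k ∧ b.2 < l) ∧ v = Finsupp.single μ 1} →
      (∀ v ∈ W, Eop (k : ℂ) (-(l : ℂ)) v ∈ W) ∧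
        (∀ v ∈ W, Fop v ∈ W) ∧
        (∀ v ∈ W, Hop (k : ℂ) (-(l : ℂ)) v ∈ W) := by
  intro W hW
  set S : Set YDSpace := {v : YDSpace | ∃ μ : YoungDiagram,
      (∀ b ∈ μ.cells, b.1 < k ∧ b.2 < l) ∧ v = Finsupp.single μ 1} with hS
  have key : ∀ (T : YDSpace →ₗ[ℂ] YDSpace), (∀ v ∈ S, T v ∈ W) →
      ∀ v ∈ W, T v ∈ W := by
    intro T hT v hv
    rw [hW] at hv
    have hle : Submodule.span ℂ S ≤ W.comap T :=
      Submodule.span_le.2 (fun x hx => hT x hx)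
    exact hle hv
  have heval : ∀ (x : YoungDiagram → YDSpace) (μ : YoungDiagram),
      (Finsupp.lsum ℂ fun l => LinearMap.toSpanSingleton ℂ YDSpace (x l))
        (Finsupp.single μ 1) = x μ := by
    intro x μ
    simp [Finsupp.lsum_single, LinearMap.toSpanSingleton_apply]
  refine ⟨?_, ?_, ?_⟩
  · -- E
    apply key
    rintro v ⟨μ, hμ, rfl⟩
    show (Finsupp.lsum ℂ fun l => LinearMap.toSpanSingleton ℂ YDSpace _) _ ∈ W
    rw [heval]
    apply finsum_mem_submodule
    intro ν
    classical
    rw [finsum_eq_if]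
    split_ifs with hcov
    · by_cases hrect : ∀ b ∈ ν.cells, b.1 < k ∧ b.2 < l
      · apply Submodule.smul_mem
        rw [hW]
        exact Submodule.subset_span ⟨ν, hrect, rfl⟩
      · push_neg at hrect
        obtain ⟨b, hb, hbad⟩ := hrect
        have hz : poch (k : ℂ) μ ν * poch (-(l : ℂ)) μ ν = 0 :=
          poch_boundary_zero k l μ ν hμ hcov b hb (by omega)
        rw [hz, zero_smul]
        exact Submodule.zero_mem W
    · exact Submodule.zero_mem W
  · -- F
    apply key
    rintro v ⟨μ, hμ, rfl⟩
    show (Finsupp.lsum ℂ fun l => LinearMap.toSpanSingleton ℂ YDSpace _) _ ∈ W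
    rw [heval]
    apply Submodule.neg_mem
    apply finsum_mem_submodule
    intro μ'
    classical
    rw [finsum_eq_if]
    split_ifs with hcov
    · have hrect : ∀ b ∈ μ'.cells, b.1 < k ∧ b.2 < l := fun b hb => hμ b (hcov.1 hb)
      rw [hW]
      exact Submodule.subset_span ⟨μ', hrect, rfl⟩
    · exact Submodule.zero_mem W
  · -- H
    apply key
    rintro v ⟨μ, hμ, rfl⟩
    show (Finsupp.lsum ℂ fun l => LinearMap.toSpanSingleton ℂ YDSpace _) _ ∈ W
    rw [heval]
    apply Submodule.smul_mem
    rw [hW]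
    exact Submodule.subset_span ⟨μ, hμ, rfl⟩
end

section
/- Let W be a finite-dimensional complex vector space and let E, F, H be linear endomorphisms of W satisfying the sl(2,ℂ) relations E∘F − F∘E = H, H∘E − E∘H = 2E, H∘F − F∘H = −2F. Then F ∘ exp(E) = exp(E) ∘ (F − H − E), where exp(E) = ∑_{k≥0} E^k/k! is the operator exponential. -/
set_option maxHeartbeats 1000000 in
/-- If `E, F, H` are endomorphisms of a finite-dimensional complex
vector space satisfying the `sl(2,ℂ)` relations, then `F ∘ exp(E) = exp(E) ∘ (F - H - E)`. -/
theorem sl2_exp_conjugation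
    (W : Type*) [NormedAddCommGroup W] [NormedSpace ℂ W] [FiniteDimensional ℂ W]
    (E F H : W →L[ℂ] W)
    (hEF : E * F - F * E = H)
    (hHE : H * E - E * H = 2 • E)
    (hHF : H * F - F * H = -(2 • F)) :
    F * NormedSpace.exp E = NormedSpace.exp E * (F - H - E) := by
  -- Algebraic part: the commutation relation between `F` and powers of `E`.
  have h1 : F * E = E * F - H := by rw [← hEF]; abel
  have h2 : H * E = E * H + (2:ℕ) • E := by rw [← hHE]; abel
  have e2 : ∀ n : ℕ, E ^ n * (E * H) = E ^ (n+1) * H := by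
    intro n; rw [← mul_assoc, ← pow_succ]
  have key : ∀ n : ℕ, F * E ^ (n + 1)
      = E ^ (n + 1) * F - (n + 1) • (E ^ n * H) - ((n + 1) * n) • E ^ n := by
    intro n
    induction n with
    | zero => simpa using h1
    | succ n ih =>
      have hs : F * E ^ (n + 2) = (F * E ^ (n + 1)) * E := by rw [mul_assoc, ← pow_succ]
      rw [hs, ih, sub_mul, sub_mul, mul_assoc, h1, smul_mul_assoc, smul_mul_assoc, mul_assoc, h2,
        ← pow_succ, mul_sub, mul_add, e2, mul_smul_comm, ← pow_succ, smul_add, smul_smul,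
        show ((n+1)+1) • (E ^ (n+1) * H) = (n+1) • (E^(n+1)*H) + E^(n+1)*H from succ_nsmul _ _,
        show ((n+1+1) * (n+1)) • E ^ (n+1) = ((n+1)*n) • E^(n+1) + ((n+1)*2) • E^(n+1) by
          rw [← add_smul]; ring_nf,
        show E^(n+1)*(E*F) = E^(n+2)*F by rw [← mul_assoc, ← pow_succ]]
      abel
  -- Analytic part: summation of the exponential series.
  have hc : ∀ n : ℕ, (Nat.factorial (n + 1) : ℂ)⁻¹ * ((n : ℂ) + 1) = (Nat.factorial n : ℂ)⁻¹ := by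
    intro n
    have h1 : ((n : ℂ) + 1) ≠ 0 := Nat.cast_add_one_ne_zero n
    have h2 : (Nat.factorial n : ℂ) ≠ 0 := Nat.cast_ne_zero.mpr (Nat.factorial_ne_zero n)
    rw [Nat.factorial_succ]
    push_cast
    field_simp
  have S : Summable (fun n : ℕ => (Nat.factorial n : ℂ)⁻¹ • E ^ n) :=
    NormedSpace.expSeries_summable' E
  have hexp : NormedSpace.exp E = ∑' n : ℕ, (Nat.factorial n : ℂ)⁻¹ • E ^ n :=
    congrFun (NormedSpace.exp_eq_tsum ℂ) E
  have SF : Summable (fun n : ℕ => (Nat.factorial n : ℂ)⁻¹ • (E ^ n * F)) := by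
    simpa only [smul_mul_assoc] using S.mul_right F
  have SH : Summable (fun n : ℕ => (Nat.factorial n : ℂ)⁻¹ • (E ^ n * H)) := by
    simpa only [smul_mul_assoc] using S.mul_right H
  have SE' : Summable (fun n : ℕ => (Nat.factorial n : ℂ)⁻¹ • (E ^ n * E)) := by
    simpa only [smul_mul_assoc] using S.mul_right E
  have SFl : Summable (fun n : ℕ => (Nat.factorial n : ℂ)⁻¹ • (F * E ^ n)) := by
    simpa only [mul_smul_comm] using S.mul_left F
  set A : ℕ → (W →L[ℂ] W) := fun n => (Nat.factorial (n + 1) : ℂ)⁻¹ • (E ^ (n + 1) * F) with hA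
  set B : ℕ → (W →L[ℂ] W) := fun n => (Nat.factorial n : ℂ)⁻¹ • (E ^ n * H) with hB
  set C : ℕ → (W →L[ℂ] W) := fun n => ((Nat.factorial n : ℂ)⁻¹ * (n : ℂ)) • E ^ n with hC
  have SA : Summable A := (summable_nat_add_iff 1).mpr SF
  have hCs : (fun n => C (n + 1)) = fun n : ℕ => (Nat.factorial n : ℂ)⁻¹ • (E ^ n * E) := by
    funext n
    simp only [hC]
    push_cast
    rw [hc n, ← pow_succ]
  have SC : Summable C := (summable_nat_add_iff 1).mp (by rw [hCs]; exact SE')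
  -- pointwise identity
  have hterm : ∀ n : ℕ, (Nat.factorial (n + 1) : ℂ)⁻¹ • (F * E ^ (n + 1)) = A n - B n - C n := by
    intro n
    rw [key n, smul_sub, smul_sub, ← Nat.cast_smul_eq_nsmul ℂ (n + 1) (E ^ n * H),
      ← Nat.cast_smul_eq_nsmul ℂ ((n + 1) * n) (E ^ n), smul_smul, smul_smul]
    push_cast
    rw [hc n, ← mul_assoc, hc n]
  -- sum values
  have hT2 : ∑' n, B n = NormedSpace.exp E * H := by
    rw [hexp, ← Summable.tsum_mul_right H S]
    exact tsum_congr fun n => by rw [hB, smul_mul_assoc]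
  have hT3 : ∑' n, C n = NormedSpace.exp E * E := by
    rw [Summable.tsum_eq_zero_add SC, hCs]
    have : C 0 = 0 := by simp [hC]
    rw [this, zero_add, hexp, ← Summable.tsum_mul_right E S]
    exact tsum_congr fun n => by rw [smul_mul_assoc]
  have hT1 : ∑' n, A n = NormedSpace.exp E * F - F := by
    have h0 : ∑' n, (Nat.factorial n : ℂ)⁻¹ • (E ^ n * F) = F + ∑' n, A n := by
      rw [Summable.tsum_eq_zero_add SF]
      simp [hA]
    have h1 : ∑' n, (Nat.factorial n : ℂ)⁻¹ • (E ^ n * F) = NormedSpace.exp E * F := by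
      rw [hexp, ← Summable.tsum_mul_right F S]
      exact tsum_congr fun n => by rw [smul_mul_assoc]
    rw [← h1, h0]; abel
  -- main chain
  have main : F * NormedSpace.exp E
      = F + ∑' n, (Nat.factorial (n + 1) : ℂ)⁻¹ • (F * E ^ (n + 1)) := by
    rw [hexp, ← Summable.tsum_mul_left F S]
    have : ∑' n, F * ((Nat.factorial n : ℂ)⁻¹ • E ^ n)
        = ∑' n, (Nat.factorial n : ℂ)⁻¹ • (F * E ^ n) := by
      exact tsum_congr fun n => mul_smul_comm _ _ _
    rw [this, Summable.tsum_eq_zero_add SFl]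
    simp
  rw [main]
  have : ∑' n, (Nat.factorial (n + 1) : ℂ)⁻¹ • (F * E ^ (n + 1)) = ∑' n, (A n - B n - C n) :=
    tsum_congr hterm
  rw [this, Summable.tsum_sub (SA.sub SH) SC, Summable.tsum_sub SA SH, hT1, hT2, hT3]
  rw [mul_sub, mul_sub]
  abel
end

section
/- For all complex numbers z, z', the operator G∘(G + (zz'−1)·id) + E∘F on the space V of finitely supported complex functions on the set of all Young diagrams commutes with F, where E and F are the operators defined below and G is defined by G δ_λ = |λ|·δ_λ. (This is the key commutation showing that the operator B_{z,z'} on symmetric functions, given on the Schur basis by B_{z,z'} s_μ = −|μ|(|μ|−1+zz') s_μ + p_1 ∑_{μ•↗μ} (z)_{μ/μ•}(z')_{μ/μ•} s_{μ•}, commutes with multiplication by p_1 and hence preserves the principal ideal generated by p_1 − 1.) -/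
/-- The operator `G`: `G δ_λ = |λ| δ_λ`, extended linearly. -/
noncomputable def Gop : YDSpace →ₗ[ℂ] YDSpace :=
  Finsupp.lsum ℂ fun l => LinearMap.toSpanSingleton ℂ YDSpace
    ((l.card : ℂ) • Finsupp.single l (1 : ℂ))

namespace YoungDiagram

/-- Row `i` can receive a new box at the end. -/
def Addable (l : YoungDiagram) (i : ℕ) : Prop := i = 0 ∨ l.rowLen i < l.rowLen (i - 1)

/-- Row `i` has a removable box at the end. -/
def Removable (l : YoungDiagram) (i : ℕ) : Prop := l.rowLen (i + 1) < l.rowLen i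

instance (l : YoungDiagram) (i : ℕ) : Decidable (Addable l i) := by
  unfold Addable; infer_instance

instance (l : YoungDiagram) (i : ℕ) : Decidable (Removable l i) := by
  unfold Removable; infer_instance

/-- Add a box at the end of row `i` (if possible). -/
noncomputable def addBox (l : YoungDiagram) (i : ℕ) : YoungDiagram :=
  if h : Addable l i then
    { cells := insert (i, l.rowLen i) l.cells
      isLowerSet := by
        rintro ⟨b1, b2⟩ ⟨a1, a2⟩ hab hb
        obtain ⟨h1, h2⟩ := Prod.mk_le_mk.mp hab
        simp only [Finset.coe_insert, Set.mem_insert_iff, Finset.mem_coe, mem_cells,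
          Prod.mk.injEq] at hb ⊢
        rcases hb with ⟨rfl, rfl⟩ | hb
        · rcases Nat.lt_or_ge a2 (l.rowLen a1) with hlt | hge
          · exact Or.inr (mem_iff_lt_rowLen.mpr hlt)
          · -- a2 ≥ rowLen a1; also a2 ≤ rowLen b1 ≤ rowLen a1, so a2 = rowLen a1
            have hle : l.rowLen b1 ≤ l.rowLen a1 := l.rowLen_anti _ _ h1
            have ha2 : a2 = l.rowLen a1 := le_antisymm (le_trans h2 hle) hge
            have ha1 : a1 = b1 := by
              by_contra hne
              have hlt1 : a1 ≤ b1 - 1 := by omega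
              have hb1 : b1 ≠ 0 := by omega
              have hlt2 : l.rowLen b1 < l.rowLen (b1 - 1) := h.resolve_left hb1
              have := l.rowLen_anti a1 (b1 - 1) hlt1
              omega
            exact Or.inl ⟨ha1, by omega⟩
        · exact Or.inr (l.isLowerSet hab hb) }
  else l

/-- Remove the last box of row `i` (if possible). -/
noncomputable def delBox (l : YoungDiagram) (i : ℕ) : YoungDiagram :=
  if h : Removable l i then
    { cells := l.cells.erase (i, l.rowLen i - 1)
      isLowerSet := by
        rintro ⟨b1, b2⟩ ⟨a1, a2⟩ hab hb
        obtain ⟨h1, h2⟩ := Prod.mk_le_mk.mp hab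
        simp only [Finset.coe_erase, Set.mem_diff, Finset.mem_coe, mem_cells,
          Set.mem_singleton_iff, Prod.mk.injEq, not_and] at hb ⊢
        obtain ⟨hbmem, hbc⟩ := hb
        refine ⟨l.isLowerSet hab hbmem, ?_⟩
        rintro rfl rfl
        -- a = (i, rowLen i - 1), b ≥ a, b ∈ l, b ≠ a
        have hbrow : b2 < l.rowLen b1 := mem_iff_lt_rowLen.mp hbmem
        rcases Nat.eq_or_lt_of_le h1 with rfl | hlt
        · exact hbc rfl (by omega)
        · have : l.rowLen b1 ≤ l.rowLen (a1 + 1) := l.rowLen_anti _ _ (by omega)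
          have hrem : l.rowLen (a1 + 1) < l.rowLen a1 := h
          omega }
  else l

variable {l ν μ : YoungDiagram} {i : ℕ}

lemma addBox_cells (h : Addable l i) :
    (l.addBox i).cells = insert (i, l.rowLen i) l.cells := by
  rw [addBox, dif_pos h]

lemma delBox_cells (h : Removable l i) :
    (l.delBox i).cells = l.cells.erase (i, l.rowLen i - 1) := by
  rw [delBox, dif_pos h]

lemma corner_not_mem : (i, l.rowLen i) ∉ l.cells := by
  simp [mem_iff_lt_rowLen]

lemma corner_mem (h : Removable l i) : (i, l.rowLen i - 1) ∈ l.cells := by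
  have : 0 < l.rowLen i := lt_of_le_of_lt (Nat.zero_le _) h
  simp only [mem_cells, mem_iff_lt_rowLen]
  omega

lemma fst_lt_card {i j : ℕ} (h : (i, j) ∈ ν) : i < ν.card := by
  have hsub : (Finset.range (i + 1)).image (fun k => (k, 0)) ⊆ ν.cells := by
    intro x hx
    simp only [Finset.mem_image, Finset.mem_range] at hx
    obtain ⟨k, hk, rfl⟩ := hx
    exact ν.up_left_mem (by omega) (Nat.zero_le j) h
  have := Finset.card_le_card hsub
  rwa [Finset.card_image_of_injective _ (fun a b hab => by simpa using hab),
    Finset.card_range] at this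

lemma rowLen_card_eq_zero : l.rowLen l.card = 0 := by
  by_contra h
  have : (l.card, 0) ∈ l := mem_iff_lt_rowLen.mpr (by omega)
  exact absurd (fst_lt_card this) (lt_irrefl _)

lemma covers_addBox (h : Addable l i) : Covers l (l.addBox i) := by
  constructor
  · rw [← cells_subset_iff, addBox_cells h]
    exact Finset.subset_insert _ _
  · show (l.addBox i).cells.card = _
    rw [addBox_cells h, Finset.card_insert_of_notMem corner_not_mem]

lemma covers_delBox (h : Removable l i) : Covers (l.delBox i) l := by
  have hc := corner_mem h
  constructor
  · rw [← cells_subset_iff, delBox_cells h]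
    exact Finset.erase_subset _ _
  · show l.cells.card = (l.delBox i).cells.card + 1
    rw [delBox_cells h, Finset.card_erase_of_mem hc]
    have : 0 < l.cells.card := Finset.card_pos.mpr ⟨_, hc⟩
    omega

lemma addBox_sdiff (h : Addable l i) :
    (l.addBox i).cells \ l.cells = {(i, l.rowLen i)} := by
  rw [addBox_cells h]
  ext x
  simp only [Finset.mem_sdiff, Finset.mem_insert, Finset.mem_singleton]
  constructor
  · rintro ⟨hx | hx, hnx⟩ <;> tauto
  · rintro rfl; exact ⟨Or.inl rfl, corner_not_mem⟩

lemma delBox_sdiff (h : Removable l i) :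
    l.cells \ (l.delBox i).cells = {(i, l.rowLen i - 1)} := by
  rw [delBox_cells h]
  ext x
  simp only [Finset.mem_sdiff, Finset.mem_erase, Finset.mem_singleton, not_and]
  constructor
  · rintro ⟨hx, hnx⟩
    by_contra hne
    exact (hnx hne) hx
  · rintro rfl
    exact ⟨corner_mem h, fun hne _ => hne rfl⟩


/-- The single new cell of a cover. -/
lemma covers_exists (h : Covers l ν) :
    ∃ b, ν.cells \ l.cells = {b} := by
  obtain ⟨hle, hcard⟩ := h
  have hsub : l.cells ⊆ ν.cells := cells_subset_iff.mpr hle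
  have : (ν.cells \ l.cells).card = 1 := by
    have e1 : ν.card = ν.cells.card := rfl
    have e2 : l.card = l.cells.card := rfl
    rw [Finset.card_sdiff_of_subset hsub]; omega
  exact Finset.card_eq_one.mp this

lemma covers_iff : Covers l ν ↔ ∃ i, Addable l i ∧ i ≤ l.card ∧ ν = l.addBox i := by
  constructor
  · intro h
    obtain ⟨⟨i, j⟩, hb⟩ := covers_exists h
    have hsub : l.cells ⊆ ν.cells := cells_subset_iff.mpr h.1
    have hbν : (i, j) ∈ ν.cells := (Finset.mem_sdiff.mp (hb ▸ Finset.mem_singleton_self _)).1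
    have hbl : (i, j) ∉ l.cells := (Finset.mem_sdiff.mp (hb ▸ Finset.mem_singleton_self _)).2
    have hmem : ∀ x ∈ ν.cells, x ≠ (i, j) → x ∈ l.cells := by
      intro x hx hne
      by_contra hxl
      have : x ∈ ν.cells \ l.cells := Finset.mem_sdiff.mpr ⟨hx, hxl⟩
      rw [hb, Finset.mem_singleton] at this
      exact hne this
    have hjle : l.rowLen i ≤ j := by
      by_contra hlt
      exact hbl (mem_iff_lt_rowLen.mpr (by omega))
    have hjge : j ≤ l.rowLen i := by
      by_contra hlt
      push_neg at hlt
      have h1 : (i, l.rowLen i) ∈ ν := ν.up_left_mem le_rfl (le_of_lt hlt) hbν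
      have h2 : (i, l.rowLen i) ∈ l.cells :=
        hmem _ h1 (by simp only [ne_eq, Prod.mk.injEq, not_and]; omega)
      exact corner_not_mem h2
    have hj : j = l.rowLen i := le_antisymm hjge hjle
    subst hj
    have hadd : Addable l i := by
      rcases Nat.eq_zero_or_pos i with rfl | hi
      · exact Or.inl rfl
      · refine Or.inr ?_
        have h1 : (i - 1, l.rowLen i) ∈ ν := ν.up_left_mem (by omega) le_rfl hbν
        have h2 : (i - 1, l.rowLen i) ∈ l.cells :=
          hmem _ h1 (by simp only [ne_eq, Prod.mk.injEq, not_and]; omega)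
        have := mem_iff_lt_rowLen.mp h2
        exact this
    refine ⟨i, hadd, ?_, ?_⟩
    · have h1 := fst_lt_card (show (i, l.rowLen i) ∈ ν from hbν)
      have hc := h.2
      have e1 : ν.card = ν.cells.card := rfl
      have e2 : l.card = l.cells.card := rfl
      omega
    · ext x
      rw [addBox_cells hadd]
      constructor
      · intro hx
        rcases eq_or_ne x (i, l.rowLen i) with rfl | hne
        · exact Finset.mem_insert_self _ _
        · exact Finset.mem_insert_of_mem (hmem _ hx hne)
      · intro hx
        rcases Finset.mem_insert.mp hx with rfl | hx
        · exact hbν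
        · exact hsub hx
  · rintro ⟨i, hadd, _, rfl⟩
    exact covers_addBox hadd

lemma covers'_iff : Covers μ l ↔ ∃ i, Removable l i ∧ i ≤ l.card ∧ μ = l.delBox i := by
  constructor
  · intro h
    obtain ⟨⟨i, j⟩, hb⟩ := covers_exists h
    have hsub : μ.cells ⊆ l.cells := cells_subset_iff.mpr h.1
    have hbl : (i, j) ∈ l.cells := (Finset.mem_sdiff.mp (hb ▸ Finset.mem_singleton_self _)).1
    have hbμ : (i, j) ∉ μ.cells := (Finset.mem_sdiff.mp (hb ▸ Finset.mem_singleton_self _)).2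
    have hmem : ∀ x ∈ l.cells, x ≠ (i, j) → x ∈ μ.cells := by
      intro x hx hne
      by_contra hxl
      have : x ∈ l.cells \ μ.cells := Finset.mem_sdiff.mpr ⟨hx, hxl⟩
      rw [hb, Finset.mem_singleton] at this
      exact hne this
    have hjlt : j < l.rowLen i := mem_iff_lt_rowLen.mp hbl
    have hjge : l.rowLen i ≤ j + 1 := by
      by_contra hlt
      push_neg at hlt
      have h1 : (i, j + 1) ∈ μ.cells := by
        refine hmem _ (mem_iff_lt_rowLen.mpr (by omega)) ?_
        simp only [ne_eq, Prod.mk.injEq, not_and]; omega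
      have h2 : (i, j) ∈ μ := μ.up_left_mem le_rfl (by omega) h1
      exact hbμ h2
    have hj : j = l.rowLen i - 1 := by omega
    have hrem : Removable l i := by
      show l.rowLen (i + 1) < l.rowLen i
      by_contra hge
      push_neg at hge
      have h1 : (i + 1, j) ∈ μ.cells := by
        refine hmem _ (mem_iff_lt_rowLen.mpr (by omega)) ?_
        simp only [ne_eq, Prod.mk.injEq, not_and]; omega
      have h2 : (i, j) ∈ μ := μ.up_left_mem (by omega) le_rfl h1
      exact hbμ h2
    subst hj
    refine ⟨i, hrem, le_of_lt (fst_lt_card (show (i, _) ∈ l from hbl)), ?_⟩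
    ext x
    rw [delBox_cells hrem]
    constructor
    · intro hx
      refine Finset.mem_erase.mpr ⟨?_, hsub hx⟩
      rintro rfl; exact hbμ hx
    · intro hx
      obtain ⟨hne, hx⟩ := Finset.mem_erase.mp hx
      exact hmem _ hx hne
  · rintro ⟨i, hrem, _, rfl⟩
    exact covers_delBox hrem

instance : DecidableEq YoungDiagram :=
  fun a b => decidable_of_iff (a.cells = b.cells) (YoungDiagram.ext_iff).symm

/-- The rows where a box can be added / removed, as finsets. -/
noncomputable def aRows (l : YoungDiagram) : Finset ℕ :=
  (Finset.range (l.card + 1)).filter (Addable l)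

noncomputable def rRows (l : YoungDiagram) : Finset ℕ :=
  (Finset.range (l.card + 1)).filter (Removable l)

noncomputable def aSet (l : YoungDiagram) : Finset YoungDiagram := (aRows l).image l.addBox

noncomputable def rSet (l : YoungDiagram) : Finset YoungDiagram := (rRows l).image l.delBox

lemma mem_aSet : ν ∈ aSet l ↔ Covers l ν := by
  rw [aSet, Finset.mem_image, covers_iff]
  constructor
  · rintro ⟨i, hi, rfl⟩
    rw [aRows, Finset.mem_filter, Finset.mem_range] at hi
    exact ⟨i, hi.2, by omega, rfl⟩
  · rintro ⟨i, h1, h2, rfl⟩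
    exact ⟨i, by rw [aRows, Finset.mem_filter, Finset.mem_range]; exact ⟨by omega, h1⟩, rfl⟩

lemma mem_rSet : μ ∈ rSet l ↔ Covers μ l := by
  rw [rSet, Finset.mem_image, covers'_iff]
  constructor
  · rintro ⟨i, hi, rfl⟩
    rw [rRows, Finset.mem_filter, Finset.mem_range] at hi
    exact ⟨i, hi.2, by omega, rfl⟩
  · rintro ⟨i, h1, h2, rfl⟩
    exact ⟨i, by rw [rRows, Finset.mem_filter, Finset.mem_range]; exact ⟨by omega, h1⟩, rfl⟩

lemma addBox_injOn {i j : ℕ} (hi : Addable l i) (hj : Addable l j)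
    (h : l.addBox i = l.addBox j) : i = j := by
  have hc : (i, l.rowLen i) ∈ (l.addBox j).cells := by
    rw [← h, addBox_cells hi]; exact Finset.mem_insert_self _ _
  rw [addBox_cells hj, Finset.mem_insert] at hc
  rcases hc with hc | hc
  · exact congrArg Prod.fst hc
  · exact absurd hc corner_not_mem

lemma delBox_injOn {i j : ℕ} (hi : Removable l i) (hj : Removable l j)
    (h : l.delBox i = l.delBox j) : i = j := by
  by_contra hne
  have hcells := congrArg YoungDiagram.cells h
  rw [delBox_cells hi, delBox_cells hj] at hcells
  have hij : (i, l.rowLen i - 1) ≠ (j, l.rowLen j - 1) := by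
    simp only [ne_eq, Prod.mk.injEq, not_and]; omega
  have : (i, l.rowLen i - 1) ∈ l.cells.erase (j, l.rowLen j - 1) :=
    Finset.mem_erase.mpr ⟨hij, corner_mem hi⟩
  rw [← hcells] at this
  exact (Finset.mem_erase.mp this).1 rfl


lemma poch_addBox (w : ℂ) (h : Addable l i) :
    poch w l (l.addBox i) = w + (l.rowLen i : ℂ) - i := by
  rw [poch, addBox_sdiff h, Finset.prod_singleton]

lemma poch_delBox (w : ℂ) (h : Removable l i) :
    poch w (l.delBox i) l = w + (l.rowLen i : ℂ) - 1 - i := by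
  rw [poch, delBox_sdiff h, Finset.prod_singleton]
  have h1 : 1 ≤ l.rowLen i := by
    have : l.rowLen (i+1) < l.rowLen i := h
    omega
  have : ((l.rowLen i - 1 : ℕ) : ℂ) = (l.rowLen i : ℂ) - 1 := by
    push_cast [Nat.cast_sub h1]; ring
  rw [this]; ring

lemma eq_of_le_of_card_le {a b : YoungDiagram} (h : a ≤ b) (hc : b.card ≤ a.card) : a = b :=
  YoungDiagram.ext (Finset.eq_of_subset_of_card_le (cells_subset_iff.mpr h) hc)

lemma card_le_of_le {a b : YoungDiagram} (h : a ≤ b) : a.card ≤ b.card :=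
  Finset.card_le_card (cells_subset_iff.mpr h)

lemma card_sup_add_card_inf (a b : YoungDiagram) :
    (a ⊔ b).card + (a ⊓ b).card = a.card + b.card := by
  show ((a ⊔ b).cells).card + ((a ⊓ b).cells).card = _
  rw [cells_sup, cells_inf]
  exact Finset.card_union_add_card_inter _ _

lemma lattice_down (h1 : Covers μ l) (h2 : Covers μ ν) (hne : ν ≠ l) :
    l ⊓ ν = μ ∧ Covers l (l ⊔ ν) ∧ Covers ν (l ⊔ ν) := by
  have hinf1 : μ ≤ l ⊓ ν := le_inf h1.1 h2.1
  have hinf2 : (l ⊓ ν).card ≤ l.card := card_le_of_le inf_le_left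
  have hinf3 : μ.card ≤ (l ⊓ ν).card := card_le_of_le hinf1
  have hl := h1.2
  have hν := h2.2
  have hne' : (l ⊓ ν).card ≠ l.card := by
    intro hc
    have : l ⊓ ν = l := eq_of_le_of_card_le inf_le_left (le_of_eq hc.symm)
    have hlν : l ≤ ν := by rw [← this]; exact inf_le_right
    have : l = ν := eq_of_le_of_card_le hlν (by omega)
    exact hne this.symm
  have hinf : l ⊓ ν = μ := (eq_of_le_of_card_le hinf1 (by omega)).symm
  have hsup := card_sup_add_card_inf l ν
  refine ⟨hinf, ⟨le_sup_left, by omega⟩, ⟨le_sup_right, by omega⟩⟩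

lemma lattice_up {ν' κ : YoungDiagram} (h1 : Covers l ν') (h2 : Covers κ ν') (hne : κ ≠ l) :
    l ⊔ κ = ν' ∧ Covers (l ⊓ κ) l ∧ Covers (l ⊓ κ) κ := by
  have hsup1 : l ⊔ κ ≤ ν' := sup_le h1.1 h2.1
  have hsup2 : l.card ≤ (l ⊔ κ).card := card_le_of_le le_sup_left
  have hsup3 : (l ⊔ κ).card ≤ ν'.card := card_le_of_le hsup1
  have hl := h1.2
  have hκ := h2.2
  have hne' : (l ⊔ κ).card ≠ l.card := by
    intro hc
    have : l = l ⊔ κ := eq_of_le_of_card_le le_sup_left (le_of_eq hc)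
    have hκl : κ ≤ l := by rw [this]; exact le_sup_right
    have : κ = l := eq_of_le_of_card_le hκl (by omega)
    exact hne this
  have hsup : l ⊔ κ = ν' := eq_of_le_of_card_le hsup1 (by omega)
  have hie := card_sup_add_card_inf l κ
  refine ⟨hsup, ⟨inf_le_left, by omega⟩, ⟨inf_le_right, by omega⟩⟩

lemma inf_sdiff_cells (l ν : YoungDiagram) :
    ν.cells \ (l ⊓ ν).cells = ν.cells \ l.cells := by
  rw [cells_inf]; ext x
  simp only [Finset.mem_sdiff, Finset.mem_inter]
  tauto

lemma sup_sdiff_cells (l ν : YoungDiagram) :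
    (l ⊔ ν).cells \ l.cells = ν.cells \ l.cells := by
  rw [cells_sup]; ext x
  simp only [Finset.mem_sdiff, Finset.mem_union]
  tauto

lemma card_eq_sum_rowLen (l : YoungDiagram) :
    l.card = ∑ i ∈ Finset.range l.card, l.rowLen i := by
  have h := Finset.card_eq_sum_card_fiberwise
    (f := Prod.fst) (s := l.cells) (t := Finset.range l.card)
    (fun x hx => Finset.mem_range.mpr (fst_lt_card (show (x.1, x.2) ∈ l by simpa using hx)))
  conv_lhs => rw [show (l.card : ℕ) = l.cells.card from rfl, h]
  refine Finset.sum_congr rfl fun i _ => ?_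
  rw [rowLen_eq_card]
  rfl

lemma gauss (n : ℕ) : (∑ i ∈ Finset.range n, (i : ℂ)) * 2 = (n : ℂ)^2 - n := by
  induction n with
  | zero => simp
  | succ m ih =>
    rw [Finset.sum_range_succ, add_mul, ih]
    push_cast
    ring

lemma telescope (z z' : ℂ) (n : ℕ) (ρ : ℕ → ℕ) (hmono : ∀ i, ρ (i+1) ≤ ρ i) (hn : ρ n = 0)
    (hsum : ∑ i ∈ Finset.range n, ρ i = n) :
    ((∑ i ∈ Finset.range (n+1),
        if i = 0 ∨ ρ i < ρ (i-1) then (z + (ρ i : ℂ) - i) * (z' + (ρ i : ℂ) - i) else 0)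
      - ∑ i ∈ Finset.range (n+1),
        if ρ (i+1) < ρ i then (z + (ρ i : ℂ) - 1 - i) * (z' + (ρ i : ℂ) - 1 - i) else 0)
    = z * z' + 2 * n := by
  rw [Finset.sum_range_succ'
    (fun i => if i = 0 ∨ ρ i < ρ (i-1) then (z + (ρ i : ℂ) - i) * (z' + (ρ i : ℂ) - i) else 0) n]
  rw [Finset.sum_range_succ
    (fun i => if ρ (i+1) < ρ i then (z + (ρ i : ℂ) - 1 - i) * (z' + (ρ i : ℂ) - 1 - i) else 0) n]
  rw [if_pos (Or.inl rfl), if_neg (show ¬ ρ (n+1) < ρ n by have := hmono n; omega)]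
  have hterm : ∀ i ∈ Finset.range n,
      (if i + 1 = 0 ∨ ρ (i+1) < ρ (i+1-1)
        then (z + (ρ (i+1) : ℂ) - (i+1 : ℕ)) * (z' + (ρ (i+1) : ℂ) - (i+1 : ℕ)) else 0)
      - (if ρ (i+1) < ρ i then (z + (ρ i : ℂ) - 1 - i) * (z' + (ρ i : ℂ) - 1 - i) else 0)
      = (z + (ρ (i+1) : ℂ) - (i+1 : ℕ)) * (z' + (ρ (i+1) : ℂ) - (i+1 : ℕ))
        - (z + (ρ i : ℂ) - 1 - i) * (z' + (ρ i : ℂ) - 1 - i) := by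
    intro i _
    rcases eq_or_lt_of_le (hmono i) with heq | hlt
    · rw [if_neg (by rw [Nat.add_sub_cancel]; omega),
        if_neg (by omega)]
      rw [heq]
      push_cast
      ring
    · rw [if_pos (by rw [Nat.add_sub_cancel]; exact Or.inr hlt), if_pos hlt]
  have step1 :
      (∑ i ∈ Finset.range n,
        if i + 1 = 0 ∨ ρ (i+1) < ρ (i+1-1)
          then (z + (ρ (i+1) : ℂ) - (i+1 : ℕ)) * (z' + (ρ (i+1) : ℂ) - (i+1 : ℕ)) else 0)
      - ∑ i ∈ Finset.range n,
          (if ρ (i+1) < ρ i then (z + (ρ i : ℂ) - 1 - i) * (z' + (ρ i : ℂ) - 1 - i) else 0)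
      = ∑ i ∈ Finset.range n,
          ((z + (ρ (i+1) : ℂ) - (i+1 : ℕ)) * (z' + (ρ (i+1) : ℂ) - (i+1 : ℕ))
            - (z + (ρ i : ℂ) - 1 - i) * (z' + (ρ i : ℂ) - 1 - i)) := by
    rw [← Finset.sum_sub_distrib]
    exact Finset.sum_congr rfl hterm
  have goal2 :
      ((z + (ρ 0 : ℂ) - (0 : ℕ)) * (z' + (ρ 0 : ℂ) - (0 : ℕ))
        + ∑ i ∈ Finset.range n,
          ((z + (ρ (i+1) : ℂ) - (i+1 : ℕ)) * (z' + (ρ (i+1) : ℂ) - (i+1 : ℕ))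
            - (z + (ρ i : ℂ) - 1 - i) * (z' + (ρ i : ℂ) - 1 - i)))
      = z * z' + 2 * n := by
    rw [Finset.sum_sub_distrib]
    have e1 : ∑ i ∈ Finset.range n,
        (z + (ρ (i+1) : ℂ) - (i+1 : ℕ)) * (z' + (ρ (i+1) : ℂ) - (i+1 : ℕ))
        = (∑ i ∈ Finset.range (n+1), (z + (ρ i : ℂ) - i) * (z' + (ρ i : ℂ) - i))
          - (z + (ρ 0 : ℂ) - (0 : ℕ)) * (z' + (ρ 0 : ℂ) - (0 : ℕ)) := by
      rw [Finset.sum_range_succ' (fun i => (z + (ρ i : ℂ) - i) * (z' + (ρ i : ℂ) - i)) n]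
      ring
    rw [e1, Finset.sum_range_succ (fun i => (z + (ρ i : ℂ) - i) * (z' + (ρ i : ℂ) - i)) n, hn]
    have e2 : ∀ i ∈ Finset.range n,
        (z + (ρ i : ℂ) - i) * (z' + (ρ i : ℂ) - i)
          - (z + (ρ i : ℂ) - 1 - i) * (z' + (ρ i : ℂ) - 1 - i)
        = (z + z' - 1) + 2 * ((ρ i : ℂ) - i) := by
      intro i _
      ring
    have e3 : (∑ i ∈ Finset.range n, (z + (ρ i : ℂ) - i) * (z' + (ρ i : ℂ) - i))
        - ∑ i ∈ Finset.range n, (z + (ρ i : ℂ) - 1 - i) * (z' + (ρ i : ℂ) - 1 - i)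
        = ∑ i ∈ Finset.range n, ((z + z' - 1) + 2 * ((ρ i : ℂ) - i)) := by
      rw [← Finset.sum_sub_distrib]
      exact Finset.sum_congr rfl e2
    have e4 : ∑ i ∈ Finset.range n, ((z + z' - 1) + 2 * ((ρ i : ℂ) - i))
        = n * (z + z' - 1) + 2 * n - ((n : ℂ)^2 - n) := by
      rw [Finset.sum_add_distrib, Finset.sum_const, Finset.card_range]
      have e5 : ∑ i ∈ Finset.range n, 2 * ((ρ i : ℂ) - i)
          = 2 * ((∑ i ∈ Finset.range n, (ρ i : ℂ)) - ∑ i ∈ Finset.range n, (i : ℂ)) := by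
        rw [← Finset.sum_sub_distrib, Finset.mul_sum]
      have e6 : (∑ i ∈ Finset.range n, (ρ i : ℂ)) = (n : ℂ) := by
        rw [← Nat.cast_sum, hsum]
      have e7 := gauss n
      rw [e5, e6]
      rw [show (∑ i ∈ Finset.range n, (i : ℂ)) = ((n : ℂ)^2 - n) / 2 by
        linear_combination e7 / 2]
      ring
    linear_combination e3 + e4
  linear_combination step1 + goal2



lemma content_identity (z z' : ℂ) (l : YoungDiagram) :
    (∑ ν ∈ aSet l, poch z l ν * poch z' l ν)
      - ∑ μ ∈ rSet l, poch z μ l * poch z' μ l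
    = z * z' + 2 * l.card := by
  have hA : ∑ ν ∈ aSet l, poch z l ν * poch z' l ν
      = ∑ i ∈ aRows l, (z + (l.rowLen i : ℂ) - i) * (z' + (l.rowLen i : ℂ) - i) := by
    unfold aSet aRows
    rw [Finset.sum_image (fun i hi j hj h => addBox_injOn
      (Finset.mem_filter.mp hi).2 (Finset.mem_filter.mp hj).2 h)]
    · refine Finset.sum_congr rfl fun i hi => ?_
      rw [poch_addBox _ (Finset.mem_filter.mp hi).2, poch_addBox _ (Finset.mem_filter.mp hi).2]
  have hR : ∑ μ ∈ rSet l, poch z μ l * poch z' μ l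
      = ∑ i ∈ rRows l, (z + (l.rowLen i : ℂ) - 1 - i) * (z' + (l.rowLen i : ℂ) - 1 - i) := by
    unfold rSet rRows
    rw [Finset.sum_image (fun i hi j hj h => delBox_injOn
      (Finset.mem_filter.mp hi).2 (Finset.mem_filter.mp hj).2 h)]
    · refine Finset.sum_congr rfl fun i hi => ?_
      rw [poch_delBox _ (Finset.mem_filter.mp hi).2, poch_delBox _ (Finset.mem_filter.mp hi).2]
  have ht := telescope z z' l.card l.rowLen
    (fun i => l.rowLen_anti i (i+1) (Nat.le_succ i)) rowLen_card_eq_zero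
    (card_eq_sum_rowLen l).symm
  rw [hA, hR]
  unfold aRows rRows
  rw [Finset.sum_filter, Finset.sum_filter]
  simp only [Addable, Removable]
  convert ht using 2

end YoungDiagram


section Operators

open YoungDiagram

variable (z z' : ℂ) (l : YoungDiagram)

lemma Eop_single :
    Eop z z' (Finsupp.single l 1) =
      ∑ ν ∈ aSet l, (poch z l ν * poch z' l ν) • Finsupp.single ν (1 : ℂ) := by
  unfold Eop
  rw [Finsupp.lsum_single, LinearMap.toSpanSingleton_apply_one]
  exact finsum_cond_eq_sum_of_cond_iff _ (fun {x} _ => mem_aSet.symm)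

lemma Fop_single :
    Fop (Finsupp.single l 1) = -∑ μ ∈ rSet l, Finsupp.single μ (1 : ℂ) := by
  unfold Fop
  rw [Finsupp.lsum_single, LinearMap.toSpanSingleton_apply_one]
  exact congrArg Neg.neg (finsum_cond_eq_sum_of_cond_iff _ (fun {x} _ => mem_rSet.symm))

lemma Gop_single :
    Gop (Finsupp.single l 1) = (l.card : ℂ) • Finsupp.single l (1 : ℂ) := by
  unfold Gop
  rw [Finsupp.lsum_single, LinearMap.toSpanSingleton_apply_one]

lemma Hop_single :
    Hop z z' (Finsupp.single l 1)
      = (z * z' + 2 * (l.card : ℂ)) • Finsupp.single l (1 : ℂ) := by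
  unfold Hop
  rw [Finsupp.lsum_single, LinearMap.toSpanSingleton_apply_one]

lemma lhom_ext1 {φ ψ : YDSpace →ₗ[ℂ] YDSpace}
    (h : ∀ a : YoungDiagram, φ (Finsupp.single a 1) = ψ (Finsupp.single a 1)) : φ = ψ := by
  apply Finsupp.lhom_ext
  intro a b
  have hb : (Finsupp.single a b : YDSpace) = b • Finsupp.single a 1 := by
    rw [Finsupp.smul_single', mul_one]
  rw [hb, map_smul, map_smul, h]

lemma poch_eq_of_inf {μ ν : YoungDiagram} (w : ℂ) (h : l ⊓ ν = μ) :
    poch w μ ν = poch w l (l ⊔ ν) := by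
  unfold poch
  rw [sup_sdiff_cells, ← h, inf_sdiff_cells]

lemma cross_sum :
    ∑ μ ∈ rSet l, ∑ ν ∈ (aSet μ).erase l,
        (poch z μ ν * poch z' μ ν) • Finsupp.single ν (1 : ℂ)
      = ∑ ν ∈ aSet l, ∑ κ ∈ (rSet ν).erase l,
        (poch z l ν * poch z' l ν) • Finsupp.single κ (1 : ℂ) := by
  rw [Finset.sum_sigma', Finset.sum_sigma']
  refine Finset.sum_nbij' (fun p => ⟨l ⊔ p.2, p.2⟩) (fun q => ⟨l ⊓ q.2, q.2⟩) ?_ ?_ ?_ ?_ ?_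
  · rintro ⟨μ, ν⟩ hp
    rw [Finset.mem_sigma] at hp
    obtain ⟨h1, h2⟩ := hp
    obtain ⟨hne, h2⟩ := Finset.mem_erase.mp h2
    obtain ⟨hinf, hc1, hc2⟩ := lattice_down (mem_rSet.mp h1) (mem_aSet.mp h2) hne
    rw [Finset.mem_sigma]
    exact ⟨mem_aSet.mpr hc1, Finset.mem_erase.mpr ⟨hne, mem_rSet.mpr hc2⟩⟩
  · rintro ⟨ν', κ⟩ hq
    rw [Finset.mem_sigma] at hq
    obtain ⟨h1, h2⟩ := hq
    obtain ⟨hne, h2⟩ := Finset.mem_erase.mp h2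
    obtain ⟨hsup, hc1, hc2⟩ := lattice_up (mem_aSet.mp h1) (mem_rSet.mp h2) hne
    rw [Finset.mem_sigma]
    exact ⟨mem_rSet.mpr hc1, Finset.mem_erase.mpr ⟨hne, mem_aSet.mpr hc2⟩⟩
  · rintro ⟨μ, ν⟩ hp
    rw [Finset.mem_sigma] at hp
    obtain ⟨h1, h2⟩ := hp
    obtain ⟨hne, h2⟩ := Finset.mem_erase.mp h2
    obtain ⟨hinf, _, _⟩ := lattice_down (mem_rSet.mp h1) (mem_aSet.mp h2) hne
    dsimp only at hinf ⊢
    rw [hinf]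
  · rintro ⟨ν', κ⟩ hq
    rw [Finset.mem_sigma] at hq
    obtain ⟨h1, h2⟩ := hq
    obtain ⟨hne, h2⟩ := Finset.mem_erase.mp h2
    obtain ⟨hsup, _, _⟩ := lattice_up (mem_aSet.mp h1) (mem_rSet.mp h2) hne
    dsimp only at hsup ⊢
    rw [hsup]
  · rintro ⟨μ, ν⟩ hp
    rw [Finset.mem_sigma] at hp
    obtain ⟨h1, h2⟩ := hp
    obtain ⟨hne, h2⟩ := Finset.mem_erase.mp h2
    obtain ⟨hinf, _, _⟩ := lattice_down (mem_rSet.mp h1) (mem_aSet.mp h2) hne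
    simp only
    rw [poch_eq_of_inf l z hinf, poch_eq_of_inf l z' hinf]

lemma EF_single :
    Eop z z' (Fop (Finsupp.single l 1)) =
      Fop (Eop z z' (Finsupp.single l 1))
        + (z * z' + 2 * (l.card : ℂ)) • Finsupp.single l (1 : ℂ) := by
  rw [Fop_single, Eop_single, map_neg, map_sum, map_sum]
  rw [Finset.sum_congr rfl (fun μ _ => Eop_single z z' μ)]
  rw [Finset.sum_congr rfl (fun ν (_ : ν ∈ aSet l) => by rw [map_smul, Fop_single])]
  have split1 : ∀ μ ∈ rSet l,
      ∑ ν ∈ aSet μ, (poch z μ ν * poch z' μ ν) • Finsupp.single ν (1 : ℂ)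
        = (∑ ν ∈ (aSet μ).erase l, (poch z μ ν * poch z' μ ν) • Finsupp.single ν (1 : ℂ))
          + (poch z μ l * poch z' μ l) • Finsupp.single l (1 : ℂ) := by
    intro μ hμ
    exact (Finset.sum_erase_add _ _ (mem_aSet.mpr (mem_rSet.mp hμ))).symm
  have split2 : ∀ ν ∈ aSet l,
      (poch z l ν * poch z' l ν) • -(∑ κ ∈ rSet ν, Finsupp.single κ (1 : ℂ))
        = -((∑ κ ∈ (rSet ν).erase l, (poch z l ν * poch z' l ν) • Finsupp.single κ (1 : ℂ))
            + (poch z l ν * poch z' l ν) • Finsupp.single l (1 : ℂ)) := by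
    intro ν hν
    rw [← Finset.sum_erase_add _ _ (mem_rSet.mpr (mem_aSet.mp hν)), smul_neg, smul_add,
      Finset.smul_sum]
  rw [Finset.sum_congr rfl split1, Finset.sum_congr rfl split2]
  rw [Finset.sum_add_distrib, Finset.sum_neg_distrib, Finset.sum_add_distrib]
  rw [← Finset.sum_smul, ← Finset.sum_smul]
  rw [cross_sum]
  have hc := content_identity z z' l
  rw [show (z * z' + 2 * (l.card : ℂ))
      = (∑ ν ∈ aSet l, poch z l ν * poch z' l ν)
        - ∑ μ ∈ rSet l, poch z μ l * poch z' μ l by linear_combination - hc]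
  module

lemma GF_comm : Gop * Fop = Fop * Gop - Fop := by
  apply lhom_ext1
  intro a
  rw [Module.End.mul_apply, LinearMap.sub_apply, Module.End.mul_apply]
  rw [Fop_single, Gop_single, map_neg, map_sum, map_smul, Fop_single]
  rw [Finset.sum_congr rfl (fun μ (_ : μ ∈ rSet a) => Gop_single μ)]
  have h1 : ∀ μ ∈ rSet a,
      ((μ.card : ℂ)) • Finsupp.single μ (1 : ℂ)
        = ((a.card : ℂ) - 1) • Finsupp.single μ (1 : ℂ) := by
    intro μ hμ
    have h2 := (mem_rSet.mp hμ).2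
    have h3 : (a.card : ℂ) = (μ.card : ℂ) + 1 := by exact_mod_cast congrArg Nat.cast h2
    rw [show ((μ.card : ℂ)) = (a.card : ℂ) - 1 by linear_combination -h3]
  rw [Finset.sum_congr rfl h1, ← Finset.smul_sum]
  module

lemma EF_comm : Eop z z' * Fop = Fop * Eop z z' + Hop z z' := by
  apply lhom_ext1
  intro a
  rw [Module.End.mul_apply, LinearMap.add_apply, Module.End.mul_apply, Hop_single, EF_single]

lemma Hop_eq : Hop z z' = (z * z') • (1 : YDSpace →ₗ[ℂ] YDSpace) + (2 : ℂ) • Gop := by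
  apply lhom_ext1
  intro a
  rw [Hop_single, LinearMap.add_apply, LinearMap.smul_apply, LinearMap.smul_apply,
    Module.End.one_apply, Gop_single]
  module

end Operators

/-- The operator `G ∘ (G + (zz'-1)·id) + E ∘ F` commutes with `F`. -/
theorem key_commutation (z z' : ℂ) :
    (Gop ∘ₗ (Gop + (z * z' - 1) • LinearMap.id) + Eop z z' ∘ₗ Fop) ∘ₗ Fop
      = Fop ∘ₗ (Gop ∘ₗ (Gop + (z * z' - 1) • LinearMap.id) + Eop z z' ∘ₗ Fop) := by
  simp only [← Module.End.mul_eq_comp, ← Module.End.one_eq_id]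
  have r1 : Gop * Fop = Fop * Gop - Fop := GF_comm
  have r2 : Eop z z' * Fop = Fop * Eop z z' + Hop z z' := EF_comm z z'
  have r3 : Hop z z' = (z * z') • (1 : YDSpace →ₗ[ℂ] YDSpace) + (2 : ℂ) • Gop := Hop_eq z z'
  have m5 : Fop * Hop z z' = (z * z') • Fop + (2 : ℂ) • (Fop * Gop) := by
    rw [r3, mul_add, mul_smul_comm, mul_one, mul_smul_comm]
  have m3 : Hop z z' * Fop = (z * z') • Fop + (2 : ℂ) • (Fop * Gop) - (2 : ℂ) • Fop := by
    rw [r3, add_mul, smul_mul_assoc, one_mul, smul_mul_assoc, r1]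
    module
  have m2 : Gop * Gop * Fop
      = Fop * Gop * Gop - (2 : ℂ) • (Fop * Gop) + Fop := by
    rw [mul_assoc, r1, mul_sub Gop (Fop * Gop) Fop, ← mul_assoc, r1, sub_mul (Fop * Gop) Fop Gop]
    module
  have m4 : Eop z z' * Fop * Fop
      = Fop * Fop * Eop z z' + (z * z') • Fop + (2 : ℂ) • (Fop * Gop)
        + ((z * z') • Fop + (2 : ℂ) • (Fop * Gop) - (2 : ℂ) • Fop) := by
    rw [r2, add_mul, mul_assoc, r2, mul_add, m3, m5, ← mul_assoc]
    module
  simp only [mul_add, add_mul, mul_smul_comm, smul_mul_assoc, mul_one]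
  rw [m2, m4, r1]
  rw [r2, mul_add Fop (Fop * Eop z z') (Hop z z'), m5]
  simp only [← mul_assoc]
  module
end
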